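/- The univariate polynomial f(x) = 1 + 4x² + x⁴ − 3x − 3x³ is nonnegative on ℝ, but f is not a SONC polynomial (it is not a finite sum of nonnegative circuit polynomials). -/

import Mathlib

open MvPolynomial Classical

noncomputable section

/-- The real point associated to an exponent vector. -/
def toR {n : ℕ} (α : Fin n →₀ ℕ) : Fin n → ℝ := fun j => (α j : ℝ)

/-- A lattice point is even if all its coordinates are even, i.e. it lies in `(2ℕ)^n`. -/
def IsEvenPt {n : ℕ} (α : Fin n →₀ ℕ) : Prop := ∀ j, Even (α j)

/-- The Newton polytope of a polynomial: the convex hull of its support. -/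
def newton {n : ℕ} (f : MvPolynomial (Fin n) ℝ) : Set (Fin n → ℝ) :=
  convexHull ℝ (toR '' (f.support : Set (Fin n →₀ ℕ)))

/-- A polynomial is nonnegative (PSD) if it is nonnegative at every real point. -/
def Nonneg {n : ℕ} (f : MvPolynomial (Fin n) ℝ) : Prop :=
  ∀ x : Fin n → ℝ, 0 ≤ eval x f

/-- A trellis: a finite set of even lattice points forming the vertex set of a simplex
(i.e. affinely independent). -/
def IsTrellis {n : ℕ} (A : Finset (Fin n →₀ ℕ)) : Prop :=
  (∀ a ∈ A, IsEvenPt a) ∧ AffineIndependent ℝ (fun a : {x // x ∈ A} => toR a.1)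

/-- A circuit polynomial: `∑_{α ∈ A} c_α x^α − d x^β` where `A` is a trellis, `c_α > 0`,
and `β` lies in the (relative) interior of `conv(A)`. -/
def IsCircuit {n : ℕ} (f : MvPolynomial (Fin n) ℝ) : Prop :=
  ∃ (A : Finset (Fin n →₀ ℕ)) (c : (Fin n →₀ ℕ) → ℝ) (β : Fin n →₀ ℕ) (d : ℝ),
    IsTrellis A ∧ (∀ a ∈ A, 0 < c a) ∧
    toR β ∈ intrinsicInterior ℝ (convexHull ℝ (toR '' (A : Set (Fin n →₀ ℕ)))) ∧
    f = (∑ a ∈ A, monomial a (c a)) - monomial β d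

/-- A monomial square: `c x^α` with `c ≥ 0` and `α` even. -/
def IsMonomialSquare {n : ℕ} (f : MvPolynomial (Fin n) ℝ) : Prop :=
  ∃ (a : Fin n →₀ ℕ) (c : ℝ), IsEvenPt a ∧ 0 ≤ c ∧ f = monomial a c

/-- A nonnegative circuit polynomial (monomial squares are also counted as such). -/
def IsNonnegCircuit {n : ℕ} (f : MvPolynomial (Fin n) ℝ) : Prop :=
  IsMonomialSquare f ∨ (IsCircuit f ∧ Nonneg f)

/-- A SONC polynomial: a finite sum of nonnegative circuit polynomials. -/
def IsSONC {n : ℕ} (f : MvPolynomial (Fin n) ℝ) : Prop :=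
  ∃ (k : ℕ) (g : Fin k → MvPolynomial (Fin n) ℝ),
    (∀ i, IsNonnegCircuit (g i)) ∧ f = ∑ i, g i

/-! ### Auxiliary linear functional -/

/-- The linear functional `∑_a coeff_a(g) * |a - 2|` on univariate polynomials. -/
def LF (g : MvPolynomial (Fin 1) ℝ) : ℝ :=
  ∑ a ∈ g.support, g.coeff a * |(a 0 : ℝ) - 2|

lemma LF_eq_sum {g : MvPolynomial (Fin 1) ℝ} {S : Finset (Fin 1 →₀ ℕ)}
    (h : g.support ⊆ S) : LF g = ∑ a ∈ S, g.coeff a * |(a 0 : ℝ) - 2| := by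
  apply Finset.sum_subset h
  intro a _ ha
  rw [MvPolynomial.notMem_support_iff.mp ha, zero_mul]

lemma LF_monomial (a : Fin 1 →₀ ℕ) (c : ℝ) :
    LF (monomial a c) = c * |(a 0 : ℝ) - 2| := by
  rcases eq_or_ne c 0 with rfl | hc
  · simp [LF]
  · rw [LF_eq_sum (S := {a}) (by classical rw [MvPolynomial.support_monomial]; simp [hc])]
    simp [MvPolynomial.coeff_monomial]

lemma LF_add (g h : MvPolynomial (Fin 1) ℝ) : LF (g + h) = LF g + LF h := by
  classical
  rw [LF_eq_sum (S := g.support ∪ h.support) MvPolynomial.support_add,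
    LF_eq_sum (S := g.support ∪ h.support) Finset.subset_union_left,
    LF_eq_sum (S := g.support ∪ h.support) Finset.subset_union_right,
    ← Finset.sum_add_distrib]
  simp [MvPolynomial.coeff_add, add_mul]

lemma LF_zero : LF 0 = 0 := by simp [LF]

lemma LF_neg (g : MvPolynomial (Fin 1) ℝ) : LF (-g) = -LF g := by
  have := LF_add g (-g)
  simp [LF_zero] at this
  linarith [this]

lemma LF_sub (g h : MvPolynomial (Fin 1) ℝ) : LF (g - h) = LF g - LF h := by
  rw [sub_eq_add_neg, LF_add, LF_neg]; ring

lemma LF_finsum {ι : Type*} (s : Finset ι) (g : ι → MvPolynomial (Fin 1) ℝ) :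
    LF (∑ i ∈ s, g i) = ∑ i ∈ s, LF (g i) := by
  classical
  induction s using Finset.induction_on with
  | empty => simp [LF_zero]
  | insert _ _ h ih => rw [Finset.sum_insert h, Finset.sum_insert h, LF_add, ih]

lemma eval_mono (x : Fin 1 → ℝ) (a : Fin 1 →₀ ℕ) (c : ℝ) :
    eval x (monomial a c) = c * (x 0) ^ (a 0) := by
  rw [eval_monomial, Finsupp.prod_fintype _ _ (fun i => pow_zero _), Fin.prod_univ_one]

/-- Any nonnegative circuit polynomial is nonnegative. -/
lemma nonneg_of_isNonnegCircuit {g : MvPolynomial (Fin 1) ℝ} (hg : IsNonnegCircuit g) :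
    Nonneg g := by
  rcases hg with ⟨a, c, hev, hc, rfl⟩ | ⟨_, h⟩
  · intro x
    rw [eval_mono]
    exact mul_nonneg hc ((hev 0).pow_nonneg _)
  · exact h

/-- The key lemma: a nonnegative circuit polynomial vanishing at the all-ones point
has nonnegative `LF` value. -/
lemma LF_nonneg_of_circuit {g : MvPolynomial (Fin 1) ℝ} (hc : IsCircuit g) (hn : Nonneg g)
    (h1 : eval (fun _ => (1 : ℝ)) g = 0) : 0 ≤ LF g := by
  obtain ⟨A, c, β, d, -, hcpos, -, rfl⟩ := hc
  have heval : ∀ t : ℝ, eval (fun _ => t) ((∑ a ∈ A, monomial a (c a)) - monomial β d)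
      = (∑ a ∈ A, c a * t ^ (a 0)) - d * t ^ (β 0) := by
    intro t
    rw [map_sub, map_sum]
    simp only [eval_mono]
  -- value at 1
  have hv1 : (∑ a ∈ A, c a) = d := by
    have := h1
    rw [heval 1] at this
    simpa using sub_eq_zero.mp this
  -- derivative at 1 vanishes
  have hderiv : HasDerivAt (fun t : ℝ => (∑ a ∈ A, c a * t ^ (a 0)) - d * t ^ (β 0))
      ((∑ a ∈ A, c a * (a 0 : ℝ)) - d * (β 0 : ℝ)) 1 := by
    apply HasDerivAt.sub
    · apply HasDerivAt.fun_sum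
      intro a _
      simpa using (hasDerivAt_pow (a 0) (1 : ℝ)).const_mul (c a)
    · simpa using (hasDerivAt_pow (β 0) (1 : ℝ)).const_mul d
  have hmin : IsLocalMin (fun t : ℝ => (∑ a ∈ A, c a * t ^ (a 0)) - d * t ^ (β 0)) 1 := by
    apply Filter.Eventually.of_forall
    intro t
    show (∑ a ∈ A, c a * (1 : ℝ) ^ (a 0)) - d * (1 : ℝ) ^ (β 0)
        ≤ (∑ a ∈ A, c a * t ^ (a 0)) - d * t ^ (β 0)
    have h0 : (∑ a ∈ A, c a * (1 : ℝ) ^ (a 0)) - d * (1 : ℝ) ^ (β 0) = 0 := by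
      rw [← heval 1]; exact h1
    have ht := hn (fun _ => t)
    rw [heval t] at ht
    linarith
  have hD : (∑ a ∈ A, c a * (a 0 : ℝ)) - d * (β 0 : ℝ) = 0 :=
    hmin.hasDerivAt_eq_zero hderiv
  -- compute LF
  have hL : LF ((∑ a ∈ A, monomial a (c a)) - monomial β d)
      = (∑ a ∈ A, c a * |(a 0 : ℝ) - 2|) - d * |(β 0 : ℝ) - 2| := by
    rw [LF_sub, LF_finsum, LF_monomial]
    simp only [LF_monomial]
  rw [hL]
  have hd : 0 ≤ d := by
    rw [← hv1]
    exact Finset.sum_nonneg fun a ha => (hcpos a ha).le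
  have key : d * |(β 0 : ℝ) - 2| ≤ ∑ a ∈ A, c a * |(a 0 : ℝ) - 2| := by
    calc d * |(β 0 : ℝ) - 2| = |d * ((β 0 : ℝ) - 2)| := by
          rw [abs_mul, abs_of_nonneg hd]
      _ = |∑ a ∈ A, c a * ((a 0 : ℝ) - 2)| := by
          congr 1
          have : ∑ a ∈ A, c a * ((a 0 : ℝ) - 2)
              = (∑ a ∈ A, c a * (a 0 : ℝ)) - 2 * (∑ a ∈ A, c a) := by
            rw [Finset.mul_sum, ← Finset.sum_sub_distrib]
            apply Finset.sum_congr rfl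
            intro a _; ring
          rw [this, hv1]
          linarith [hD]
      _ ≤ ∑ a ∈ A, |c a * ((a 0 : ℝ) - 2)| := Finset.abs_sum_le_sum_abs _ _
      _ = ∑ a ∈ A, c a * |(a 0 : ℝ) - 2| := by
          apply Finset.sum_congr rfl
          intro a ha
          rw [abs_mul, abs_of_nonneg (hcpos a ha).le]
  linarith

/-- The univariate polynomial `f = 1 + 4x² + x⁴ − 3x − 3x³` is nonnegative on
`ℝ` but is not a SONC polynomial. -/
theorem stmt15 (f : MvPolynomial (Fin 1) ℝ)
    (hf : f = 1 + 4 * X 0 ^ 2 + X 0 ^ 4 - 3 * X 0 - 3 * X 0 ^ 3) :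
    Nonneg f ∧ ¬ IsSONC f := by
  have hmono : f = monomial (Finsupp.single 0 0) (1 : ℝ)
      + monomial (Finsupp.single 0 2) 4 + monomial (Finsupp.single 0 4) 1
      - monomial (Finsupp.single 0 1) 3 - monomial (Finsupp.single 0 3) 3 := by
    have hX1 : (X 0 : MvPolynomial (Fin 1) ℝ) = monomial (Finsupp.single 0 1) 1 := by
      rw [← X_pow_eq_monomial, pow_one]
    have h1m : (1 : MvPolynomial (Fin 1) ℝ) = monomial (Finsupp.single 0 0) 1 := by
      rw [← X_pow_eq_monomial, pow_zero]
    rw [hf, show (4 : MvPolynomial (Fin 1) ℝ) = C 4 from (map_ofNat C 4).symm,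
      show (3 : MvPolynomial (Fin 1) ℝ) = C 3 from (map_ofNat C 3).symm,
      X_pow_eq_monomial, X_pow_eq_monomial, X_pow_eq_monomial, h1m, hX1,
      C_mul_monomial, C_mul_monomial, C_mul_monomial]
    norm_num
  have hLf : LF f = -2 := by
    rw [hmono, LF_sub, LF_sub, LF_add, LF_add, LF_monomial, LF_monomial, LF_monomial,
      LF_monomial, LF_monomial]
    simp only [Finsupp.single_eq_same]
    norm_num [abs_of_nonneg, abs_of_nonpos]
  constructor
  · intro x
    rw [hf]
    simp only [map_add, map_sub, map_mul, map_one, map_pow, eval_X, map_ofNat]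
    nlinarith [sq_nonneg (x 0 - 1), sq_nonneg (x 0 ^ 2 - x 0),
      mul_nonneg (sq_nonneg (x 0 - 1)) (sq_nonneg (x 0)), sq_nonneg (x 0 ^ 2 - 1)]
  · rintro ⟨k, g, hg, hsum⟩
    have h1 : eval (fun _ => (1 : ℝ)) f = 0 := by
      rw [hmono]
      simp only [map_add, map_sub, eval_mono, one_pow]
      norm_num
    have hge : ∀ i, 0 ≤ eval (fun _ => (1 : ℝ)) (g i) :=
      fun i => nonneg_of_isNonnegCircuit (hg i) _
    have hzero : ∀ i ∈ Finset.univ, eval (fun _ => (1 : ℝ)) (g i) = 0 := by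
      rw [hsum, map_sum] at h1
      exact (Finset.sum_eq_zero_iff_of_nonneg (fun i _ => hge i)).mp h1
    have hLi : ∀ i, 0 ≤ LF (g i) := by
      intro i
      rcases hg i with ⟨a, c, hev, hc, hgi⟩ | ⟨hcirc, hn⟩
      · rw [hgi, LF_monomial]
        exact mul_nonneg hc (abs_nonneg _)
      · exact LF_nonneg_of_circuit hcirc hn (hzero i (Finset.mem_univ i))
    have hpos : 0 ≤ LF f := by
      rw [hsum, LF_finsum]
      exact Finset.sum_nonneg fun i _ => hLi i
    rw [hLf] at hpos
    norm_num at hpos
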